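/- Let R be a finite nonzero commutative ring with identity, let 2 ≤ k < n, let f_i : R^{2i-2} → R for 2 ≤ i ≤ n be arbitrary functions, and let A ⊆ R. Then the characteristic polynomial of the (real) adjacency matrix of BΓ_k[A] divides the characteristic polynomial of the (real) adjacency matrix of BΓ_n[A]; equivalently, the multiset of eigenvalues (with multiplicities) of the adjacency matrix of BΓ_k[A] is contained in the multiset of eigenvalues of the adjacency matrix of BΓ_n[A]. -/

import Mathlib

attribute [local instance] Classical.propDecidable

/-- The adjacency condition of the graph `BΓ(R; f₂, …, f_n)`. -/
def bAdj {R : Type} [CommRing R] (n : ℕ)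
    (f : (i : ℕ) → (Fin i → R) → (Fin i → R) → R)
    (p l : Fin n → R) : Prop :=
  ∀ i : Fin n, 1 ≤ (i : ℕ) →
    p i + l i = f i (fun j => p (Fin.castLE i.isLt.le j))
                    (fun j => l (Fin.castLE i.isLt.le j))

/-- The bipartite graph `BΓ(R; f₂, …, f_n)`. -/
def BGamma (R : Type) [CommRing R] (n : ℕ)
    (f : (i : ℕ) → (Fin i → R) → (Fin i → R) → R) :
    SimpleGraph ((Fin n → R) ⊕ (Fin n → R)) :=
  SimpleGraph.fromRel (fun x y => ∃ p l, x = Sum.inl p ∧ y = Sum.inr l ∧ bAdj n f p l)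

/-- The set of vertices (points and lines) whose first coordinate lies in `A`;
`BΓ_n[A]` is the subgraph induced on this set. -/
def firstIn (R : Type) [CommRing R] (A : Set R) (n : ℕ) (hn : 0 < n) :
    Set ((Fin n → R) ⊕ (Fin n → R)) :=
  {v | Sum.elim (fun p : Fin n → R => p ⟨0, hn⟩) (fun l : Fin n → R => l ⟨0, hn⟩) v ∈ A}

/-! ### Auxiliary linear algebra -/

theorem aux_sumExtend_apply_inl {K V ι : Type*} [Field K] [AddCommGroup V] [Module K V]
    {v : ι → V} (hs : LinearIndependent K v) (i : ι) :
    Module.Basis.sumExtend hs (Sum.inl i) = v i := by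
  simp only [Module.Basis.sumExtend, Module.Basis.reindex_apply, Equiv.symm_symm, Equiv.trans_apply,
    Equiv.sumCongr_apply, Sum.map_inl, Equiv.Set.sumDiffSubset_apply_inl,
    Module.Basis.extend_apply_self, Equiv.ofInjective_apply, Trans.trans]
  simp [Equiv.sumCongr, Equiv.Set.sumDiffSubset, Equiv.Set.union]
  rfl

theorem aux_charpoly_dvd_of_intertwine {F α β : Type} [Field F] [Fintype α] [Fintype β]
    [DecidableEq α] [DecidableEq β]
    (B : Matrix α α F) (A : Matrix β β F) (M : Matrix β α F)
    (hAM : A * M = M * B) (hM : LinearIndependent F (fun j : α => M.transpose j)) :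
    B.charpoly ∣ A.charpoly := by
  classical
  let b := Module.Basis.sumExtend hM
  haveI : Fintype ↑(Module.Basis.sumExtendIndex hM) := by
    haveI := FiniteDimensional.fintypeBasisIndex b
    exact Fintype.ofInjective (Sum.inr : _ → α ⊕ ↑(Module.Basis.sumExtendIndex hM)) Sum.inr_injective
  let f : (β → F) →ₗ[F] (β → F) := A.mulVecLin
  have hb : ∀ j : α, b (Sum.inl j) = M.transpose j := fun j => aux_sumExtend_apply_inl hM j
  have hcol : ∀ (w : α → F), M.mulVec w = ∑ i : α, w i • M.transpose i := by
    intro w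
    ext r
    simp [Matrix.mulVec, dotProduct, Finset.sum_apply, mul_comm]
  have key : ∀ j : α, f (b (Sum.inl j)) = ∑ i : α, B i j • b (Sum.inl i) := by
    intro j
    have h1 : M.transpose j = M.mulVec (Pi.single j 1) := by
      ext r; simp [Matrix.mulVec_single]
    rw [hb j, h1]
    have h3 : f (M.mulVec (Pi.single j 1)) = M.mulVec (B.mulVec (Pi.single j 1)) := by
      show A.mulVec (M.mulVec (Pi.single j 1)) = _
      rw [Matrix.mulVec_mulVec, Matrix.mulVec_mulVec, hAM]
    rw [h3]
    have h2 : B.mulVec (Pi.single j 1) = fun i => B i j := by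
      ext i; simp [Matrix.mulVec_single]
    rw [h2, hcol]
    simp only [hb]
  set P := LinearMap.toMatrix b b f with hP
  have hrepr : ∀ (j : α) (x : α ⊕ ↑(Module.Basis.sumExtendIndex hM)),
      b.repr (f (b (Sum.inl j))) x = Sum.elim (fun i => B i j) (fun _ => 0) x := by
    intro j x
    rw [key j, map_sum]
    simp only [_root_.map_smul, Module.Basis.repr_self]
    rcases x with i | g
    · simp [Finsupp.single_apply]
    · simp [Finsupp.single_apply]
  have hPblock : P = Matrix.fromBlocks B P.toBlocks₁₂ 0 P.toBlocks₂₂ := by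
    ext x y
    rcases x with i | g <;> rcases y with j | h
    · simp only [Matrix.fromBlocks_apply₁₁]
      rw [hP, LinearMap.toMatrix_apply, hrepr j]
      simp
    · simp [Matrix.toBlocks₁₂]
    · simp only [Matrix.fromBlocks_apply₂₁, Matrix.zero_apply]
      rw [hP, LinearMap.toMatrix_apply, hrepr j]
      simp
    · simp [Matrix.toBlocks₂₂]
  have hA : A.charpoly = f.charpoly := by
    rw [← LinearMap.charpoly_toMatrix f (Pi.basisFun F β)]
    congr 1
    rw [LinearMap.toMatrix_eq_toMatrix']
    exact (LinearMap.toMatrix'_toLin' A).symm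
  have hPc : P.charpoly = f.charpoly := LinearMap.charpoly_toMatrix f b
  rw [hA, ← hPc, hPblock, Matrix.charpoly_fromBlocks_zero₂₁]
  exact Dvd.intro _ rfl

/-! ### Auxiliary graph combinatorics -/

theorem aux_BGamma_adj_inl_inr {R : Type} [CommRing R] {n : ℕ}
    (f : (i : ℕ) → (Fin i → R) → (Fin i → R) → R) (p l : Fin n → R) :
    (BGamma R n f).Adj (Sum.inl p) (Sum.inr l) ↔ bAdj n f p l := by
  simp [BGamma, SimpleGraph.fromRel_adj]

theorem aux_BGamma_adj_inr_inl {R : Type} [CommRing R] {n : ℕ}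
    (f : (i : ℕ) → (Fin i → R) → (Fin i → R) → R) (p l : Fin n → R) :
    (BGamma R n f).Adj (Sum.inr l) (Sum.inl p) ↔ bAdj n f p l := by
  simp [BGamma, SimpleGraph.fromRel_adj]

theorem aux_BGamma_adj_inl_inl {R : Type} [CommRing R] {n : ℕ}
    (f : (i : ℕ) → (Fin i → R) → (Fin i → R) → R) (p p' : Fin n → R) :
    ¬ (BGamma R n f).Adj (Sum.inl p) (Sum.inl p') := by
  simp [BGamma, SimpleGraph.fromRel_adj]

theorem aux_BGamma_adj_inr_inr {R : Type} [CommRing R] {n : ℕ}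
    (f : (i : ℕ) → (Fin i → R) → (Fin i → R) → R) (l l' : Fin n → R) :
    ¬ (BGamma R n f).Adj (Sum.inr l) (Sum.inr l') := by
  simp [BGamma, SimpleGraph.fromRel_adj]

theorem aux_bAdj_swap {R : Type} [CommRing R] {n : ℕ}
    (f : (i : ℕ) → (Fin i → R) → (Fin i → R) → R) (p l : Fin n → R) :
    bAdj n (fun i a b => f i b a) l p ↔ bAdj n f p l := by
  constructor <;> intro h i hi
  · have := h i hi
    rw [show l i + p i = p i + l i from add_comm _ _] at this
    exact this
  · have := h i hi
    rw [show p i + l i = l i + p i from add_comm _ _] at this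
    exact this

theorem aux_bAdj_trunc {R : Type} [CommRing R] {n k : ℕ} (hkn : k ≤ n)
    (f : (i : ℕ) → (Fin i → R) → (Fin i → R) → R) (p l : Fin n → R) (h : bAdj n f p l) :
    bAdj k f (fun j => p (Fin.castLE hkn j)) (fun j => l (Fin.castLE hkn j)) := by
  intro i hi
  exact h (Fin.castLE hkn i) hi

/-- extend a partial line vector `l` to a full one adjacent to `p`. -/
def extFun {R : Type} [CommRing R] (n k : ℕ)
    (f : (i : ℕ) → (Fin i → R) → (Fin i → R) → R)
    (p : Fin n → R) (l : Fin k → R) : (i : ℕ) → i < n → R :=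
  fun i hi =>
    if h : i < k then l ⟨i, h⟩
    else f i (fun j : Fin i => p ⟨j.val, lt_trans j.isLt hi⟩)
             (fun j : Fin i => extFun n k f p l j.val (lt_trans j.isLt hi))
         - p ⟨i, hi⟩
termination_by i _ => i
decreasing_by exact j.isLt

theorem aux_exists_unique_line {R : Type} [CommRing R] {n k : ℕ} (hk : 1 ≤ k) (hkn : k ≤ n)
    (f : (i : ℕ) → (Fin i → R) → (Fin i → R) → R)
    (p : Fin n → R) (l : Fin k → R)
    (h : bAdj k f (fun j => p (Fin.castLE hkn j)) l) :
    ∃! l' : Fin n → R, (fun j => l' (Fin.castLE hkn j)) = l ∧ bAdj n f p l' := by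
  set l' : Fin n → R := fun i => extFun n k f p l i.val i.isLt with hl'
  have htr : ∀ i : Fin n, (hik : i.val < k) → l' i = l ⟨i.val, hik⟩ := by
    intro i hik
    show extFun n k f p l i.val i.isLt = _
    rw [extFun.eq_def]
    simp [hik]
  have hadj : bAdj n f p l' := by
    intro i hi
    by_cases hik : (i : ℕ) < k
    · have harg : (fun j : Fin (i : ℕ) => l' (Fin.castLE i.isLt.le j))
          = (fun j : Fin (i : ℕ) => l (Fin.castLE (le_of_lt hik) j)) := by
        funext j
        exact htr _ (lt_trans j.isLt hik)
      have hli : l' i = l ⟨i.val, hik⟩ := htr i hik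
      rw [harg, hli]
      exact h ⟨i.val, hik⟩ hi
    · have : l' i = f i (fun j => p (Fin.castLE i.isLt.le j))
          (fun j => l' (Fin.castLE i.isLt.le j)) - p i := by
        show extFun n k f p l i.val i.isLt = _
        rw [extFun.eq_def]
        simp only [hik, dif_neg, not_false_iff]
        rfl
      rw [this]; ring
  refine ⟨l', ⟨?_, hadj⟩, ?_⟩
  · funext j
    exact htr _ (by simpa using j.isLt)
  · rintro l'' ⟨h1, h2⟩
    suffices H : ∀ iv : ℕ, ∀ hiv : iv < n, l'' ⟨iv, hiv⟩ = l' ⟨iv, hiv⟩ by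
      funext i
      have := H i.val i.isLt
      simpa using this
    intro iv
    induction iv using Nat.strong_induction_on with
    | _ iv IH =>
      intro hiv
      by_cases hik : iv < k
      · have e1 : l'' ⟨iv, hiv⟩ = l ⟨iv, hik⟩ := congrFun h1 ⟨iv, hik⟩
        rw [e1, htr ⟨iv, hiv⟩ hik]
      · have h1le : 1 ≤ ((⟨iv, hiv⟩ : Fin n) : ℕ) := by simp; omega
        have e2 := h2 ⟨iv, hiv⟩ h1le
        have e3 := hadj ⟨iv, hiv⟩ h1le
        have harg : (fun j : Fin iv => l'' (Fin.castLE hiv.le j))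
            = (fun j : Fin iv => l' (Fin.castLE hiv.le j)) := by
          funext j
          exact IH j.val j.isLt _
        rw [harg] at e2
        have := e2.trans e3.symm
        exact add_left_cancel this

/-- For `2 ≤ k < n`, the characteristic polynomial of the real adjacency matrix of `BΓ_k[A]`
divides that of `BΓ_n[A]`: the spectrum of `BΓ_k[A]` embeds in that of `BΓ_n[A]`. -/
theorem statement_4 (R : Type) [CommRing R] [Nontrivial R] [Fintype R] (n k : ℕ)
    (hk : 2 ≤ k) (hkn : k < n)
    (f : (i : ℕ) → (Fin i → R) → (Fin i → R) → R) (A : Set R) :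
    Matrix.charpoly
        (SimpleGraph.adjMatrix ℝ ((BGamma R k f).induce (firstIn R A k (by omega)))) ∣
      Matrix.charpoly
        (SimpleGraph.adjMatrix ℝ ((BGamma R n f).induce (firstIn R A n (by omega)))) := by
  classical
  have hk0 : 0 < k := by omega
  have hn0 : 0 < n := by omega
  have hk1 : 1 ≤ k := by omega
  have hkn' : k ≤ n := le_of_lt hkn
  -- truncation
  set tr : (Fin n → R) → (Fin k → R) := fun p j => p (Fin.castLE hkn' j) with htr_def
  set π : (Fin n → R) ⊕ (Fin n → R) → (Fin k → R) ⊕ (Fin k → R) := Sum.map tr tr with hπ_def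
  have hmem : ∀ x, (π x ∈ firstIn R A k hk0 ↔ x ∈ firstIn R A n hn0) := by
    rintro (p | l) <;> exact Iff.rfl
  -- the intertwining matrix
  set M : Matrix (↥(firstIn R A n hn0)) (↥(firstIn R A k hk0)) ℝ :=
    fun w v => if π w.val = v.val then 1 else 0 with hM_def
  -- zero-extension, giving lifts
  set ex : (Fin k → R) → (Fin n → R) := fun p i => if h : (i : ℕ) < k then p ⟨i, h⟩ else 0
    with hex_def
  have hex_tr : ∀ p : Fin k → R, tr (ex p) = p := by
    intro p
    funext j
    show (if h : ((Fin.castLE hkn' j : Fin n) : ℕ) < k then p ⟨_, h⟩ else 0) = p j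
    rw [dif_pos (by simpa using j.isLt)]
    exact congrArg p (Fin.val_injective (by simp))
  have lift_exists : ∀ v : ↥(firstIn R A k hk0), ∃ w : ↥(firstIn R A n hn0), π w.val = v.val := by
    rintro ⟨(p | l), hv⟩
    · refine ⟨⟨Sum.inl (ex p), ?_⟩, ?_⟩
      · show (ex p) ⟨0, hn0⟩ ∈ A
        show (if h : ((⟨0, hn0⟩ : Fin n) : ℕ) < k then p ⟨_, h⟩ else 0) ∈ A
        rw [dif_pos hk0]
        exact hv
      · show Sum.inl (tr (ex p)) = Sum.inl p
        rw [hex_tr]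
    · refine ⟨⟨Sum.inr (ex l), ?_⟩, ?_⟩
      · show (ex l) ⟨0, hn0⟩ ∈ A
        show (if h : ((⟨0, hn0⟩ : Fin n) : ℕ) < k then l ⟨_, h⟩ else 0) ∈ A
        rw [dif_pos hk0]
        exact hv
      · show Sum.inr (tr (ex l)) = Sum.inr l
        rw [hex_tr]
  -- linear independence of the columns of M
  have hLI : LinearIndependent ℝ (fun v : ↥(firstIn R A k hk0) => M.transpose v) := by
    rw [Fintype.linearIndependent_iff]
    intro g hg v
    obtain ⟨w, hw⟩ := lift_exists v
    have hgw := congrFun hg w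
    simp only [Finset.sum_apply, Pi.smul_apply, Matrix.transpose_apply, smul_eq_mul,
      Pi.zero_apply] at hgw
    have hterm : ∀ v' : ↥(firstIn R A k hk0),
        g v' * M w v' = if v' = v then g v' else 0 := by
      intro v'
      by_cases hv' : v' = v
      · subst hv'
        simp [hM_def, hw]
      · have hne : π w.val ≠ v'.val := by
          rw [hw]
          intro hc
          exact hv' (Subtype.ext hc.symm)
        simp [hM_def, hne, hv']
    rw [Finset.sum_congr rfl (fun v' _ => hterm v')] at hgw
    simpa using hgw
  -- truncation preserves adjacency
  have htruncAdj : ∀ x y, (BGamma R n f).Adj x y → (BGamma R k f).Adj (π x) (π y) := by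
    rintro (p | l) (p' | l') h
    · exact absurd h (aux_BGamma_adj_inl_inl f p p')
    · rw [aux_BGamma_adj_inl_inr] at h
      show (BGamma R k f).Adj (Sum.inl (tr p)) (Sum.inr (tr l'))
      rw [aux_BGamma_adj_inl_inr]
      exact aux_bAdj_trunc hkn' f p l' h
    · rw [aux_BGamma_adj_inr_inl] at h
      show (BGamma R k f).Adj (Sum.inr (tr l)) (Sum.inl (tr p'))
      rw [aux_BGamma_adj_inr_inl]
      exact aux_bAdj_trunc hkn' f p' l h
    · exact absurd h (aux_BGamma_adj_inr_inr f l l')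
  -- unique lifts of edges
  have key : ∀ (w : ↥(firstIn R A n hn0)) (v : ↥(firstIn R A k hk0)),
      (BGamma R k f).Adj (π w.val) v.val →
      ∃! w' : ↥(firstIn R A n hn0),
        (BGamma R n f).Adj w.val w'.val ∧ π w'.val = v.val := by
    rintro ⟨(p | lf), hw⟩ ⟨(pk | l), hv⟩ hadj
    · exact absurd hadj (aux_BGamma_adj_inl_inl f _ _)
    · -- w is a point, v is a line
      have h1 : bAdj k f (tr p) l := by
        have := hadj
        rw [show π (Sum.inl p) = Sum.inl (tr p) from rfl, aux_BGamma_adj_inl_inr] at this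
        exact this
      obtain ⟨l', ⟨hl1, hl2⟩, hu⟩ := aux_exists_unique_line hk1 hkn' f p l h1
      have hmem' : Sum.inr l' ∈ firstIn R A n hn0 := by
        show l' ⟨0, hn0⟩ ∈ A
        have : l' ⟨0, hn0⟩ = l ⟨0, hk0⟩ := congrFun hl1 ⟨0, hk0⟩
        rw [this]
        exact hv
      refine ⟨⟨Sum.inr l', hmem'⟩, ⟨?_, ?_⟩, ?_⟩
      · show (BGamma R n f).Adj (Sum.inl p) (Sum.inr l')
        rw [aux_BGamma_adj_inl_inr]; exact hl2
      · show Sum.inr (tr l') = Sum.inr l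
        rw [Sum.inr.injEq]
        exact hl1
      · rintro ⟨(p'' | l''), hw''⟩ ⟨ha'', hp''⟩
        · exact absurd ha'' (aux_BGamma_adj_inl_inl f _ _)
        · apply Subtype.ext
          show Sum.inr l'' = Sum.inr l'
          rw [Sum.inr.injEq]
          apply hu
          constructor
          · have : Sum.inr (tr l'') = Sum.inr l := hp''
            rw [Sum.inr.injEq] at this
            exact this
          · rw [aux_BGamma_adj_inl_inr] at ha''
            exact ha''
    · -- w is a line, v is a point
      have h1 : bAdj k f pk (tr lf) := by
        have := hadj
        rw [show π (Sum.inr lf) = Sum.inr (tr lf) from rfl, aux_BGamma_adj_inr_inl] at this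
        exact this
      have h1' : bAdj k (fun i a b => f i b a) (tr lf) pk := (aux_bAdj_swap f pk (tr lf)).mpr h1
      obtain ⟨p', ⟨hl1, hl2⟩, hu⟩ :=
        aux_exists_unique_line hk1 hkn' (fun i a b => f i b a) lf pk h1'
      have hl2' : bAdj n f p' lf := (aux_bAdj_swap f p' lf).mp hl2
      have hmem' : Sum.inl p' ∈ firstIn R A n hn0 := by
        show p' ⟨0, hn0⟩ ∈ A
        have : p' ⟨0, hn0⟩ = pk ⟨0, hk0⟩ := congrFun hl1 ⟨0, hk0⟩
        rw [this]
        exact hv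
      refine ⟨⟨Sum.inl p', hmem'⟩, ⟨?_, ?_⟩, ?_⟩
      · show (BGamma R n f).Adj (Sum.inr lf) (Sum.inl p')
        rw [aux_BGamma_adj_inr_inl]; exact hl2'
      · show Sum.inl (tr p') = Sum.inl pk
        rw [Sum.inl.injEq]
        exact hl1
      · rintro ⟨(p'' | l''), hw''⟩ ⟨ha'', hp''⟩
        · apply Subtype.ext
          show Sum.inl p'' = Sum.inl p'
          rw [Sum.inl.injEq]
          apply hu
          constructor
          · have : Sum.inl (tr p'') = Sum.inl pk := hp''
            rw [Sum.inl.injEq] at this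
            exact this
          · rw [aux_BGamma_adj_inr_inl] at ha''
            exact (aux_bAdj_swap f p'' lf).mpr ha''
        · exact absurd ha'' (aux_BGamma_adj_inr_inr f _ _)
    · exact absurd hadj (aux_BGamma_adj_inr_inr f _ _)
  -- induced adjacency
  have hInd_n : ∀ (a b : ↥(firstIn R A n hn0)),
      ((BGamma R n f).induce (firstIn R A n hn0)).Adj a b ↔ (BGamma R n f).Adj a.val b.val := by
    intro a b; simp
  have hInd_k : ∀ (a b : ↥(firstIn R A k hk0)),
      ((BGamma R k f).induce (firstIn R A k hk0)).Adj a b ↔ (BGamma R k f).Adj a.val b.val := by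
    intro a b; simp
  -- the intertwining identity
  have hAM : (SimpleGraph.adjMatrix ℝ ((BGamma R n f).induce (firstIn R A n hn0))) * M
      = M * (SimpleGraph.adjMatrix ℝ ((BGamma R k f).induce (firstIn R A k hk0))) := by
    ext w v
    rw [Matrix.mul_apply, Matrix.mul_apply]
    have hR : ∀ u : ↥(firstIn R A k hk0),
        M w u * (SimpleGraph.adjMatrix ℝ ((BGamma R k f).induce (firstIn R A k hk0))) u v
          = if u = (⟨π w.val, (hmem w.val).mpr w.prop⟩ : ↥(firstIn R A k hk0))
              then (if (BGamma R k f).Adj (π w.val) v.val then 1 else 0) else 0 := by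
      intro u
      by_cases hu : u = (⟨π w.val, (hmem w.val).mpr w.prop⟩ : ↥(firstIn R A k hk0))
      · subst hu
        rw [if_pos rfl, SimpleGraph.adjMatrix_apply]
        have hM1 : M w ⟨π w.val, (hmem w.val).mpr w.prop⟩ = 1 := by simp [hM_def]
        rw [hM1, one_mul, if_congr (hInd_k _ v) rfl rfl]
      · have hne : π w.val ≠ u.val := fun hc => hu (Subtype.ext hc.symm)
        rw [if_neg hu]
        have : M w u = 0 := by simp [hM_def, hne]
        rw [this, zero_mul]
    rw [Finset.sum_congr rfl (fun u _ => hR u), Finset.sum_ite_eq']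
    rw [if_pos (Finset.mem_univ _)]
    by_cases h : (BGamma R k f).Adj (π w.val) v.val
    · rw [if_pos h]
      obtain ⟨w0, ⟨ha0, hp0⟩, hu0⟩ := key w v h
      have hL : ∀ w' : ↥(firstIn R A n hn0),
          (SimpleGraph.adjMatrix ℝ ((BGamma R n f).induce (firstIn R A n hn0))) w w' * M w' v
            = if w' = w0 then 1 else 0 := by
        intro w'
        by_cases hw' : w' = w0
        · have hAdj : ((BGamma R n f).induce (firstIn R A n hn0)).Adj w w' :=
            (hInd_n w w').mpr (by rw [hw']; exact ha0)
          have hMv : M w' v = 1 := by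
            have : π w'.val = v.val := by rw [hw']; exact hp0
            simp [hM_def, this]
          rw [SimpleGraph.adjMatrix_apply, if_pos hAdj, hMv, one_mul, if_pos hw']
        · rw [SimpleGraph.adjMatrix_apply, if_neg hw']
          by_cases h1 : (BGamma R n f).Adj w.val w'.val
          · by_cases h2 : π w'.val = v.val
            · exact absurd (hu0 w' ⟨h1, h2⟩) hw'
            · have : M w' v = 0 := by simp [hM_def, h2]
              rw [this, mul_zero]
          · rw [if_neg (fun hc => h1 ((hInd_n w w').mp hc)), zero_mul]
      rw [Finset.sum_congr rfl (fun w' _ => hL w'), Finset.sum_ite_eq']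
      rw [if_pos (Finset.mem_univ _)]
    · rw [if_neg h]
      apply Finset.sum_eq_zero
      intro w' _
      by_cases h1 : (BGamma R n f).Adj w.val w'.val
      · by_cases h2 : π w'.val = v.val
        · exfalso
          apply h
          have := htruncAdj w.val w'.val h1
          rwa [h2] at this
        · have : M w' v = 0 := by simp [hM_def, h2]
          rw [this, mul_zero]
      · rw [SimpleGraph.adjMatrix_apply, if_neg (fun hc => h1 ((hInd_n w w').mp hc)), zero_mul]
  exact aux_charpoly_dvd_of_intertwine _ _ M hAM hLI
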